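/- Let G be a connected graph with a closed labeling, with layers L_N = {i : dist(1,i) = N}. If d = max(L_N), then L_{N+1} = N^>(d) = {j ∈ N(d) : j > d}. -/

import Mathlib

def IsClosedLabeling {n : ℕ} (G : SimpleGraph (Fin n)) : Prop :=
  ∀ u v w : Fin n, G.Adj v u → G.Adj v w → u ≠ w →
    ((v < u ∧ v < w) ∨ (u < v ∧ w < v)) → G.Adj u w

def layer {n : ℕ} (G : SimpleGraph (Fin (n + 1))) (N : ℕ) : Set (Fin (n + 1)) :=
  {i | G.dist 0 i = N}

namespace ClosedLabelingAux

variable {n : ℕ} {G : SimpleGraph (Fin (n + 1))}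

/-- Descent lemma: if there is a walk from `i` to some vertex `v < i`, then `i` has a
neighbor smaller than itself. Proved by induction on a bound of the walk length. -/
lemma descent (hG : IsClosedLabeling G) :
    ∀ (ℓ : ℕ) (i v : Fin (n + 1)) (W : G.Walk i v), W.length ≤ ℓ → v < i →
      ∃ w, G.Adj i w ∧ w < i ∧ ∃ W₂ : G.Walk w v, W₂.length + 1 ≤ ℓ := by
  intro ℓ
  induction ℓ with
  | zero =>
    intro i v W hW hv
    cases W with
    | nil => exact absurd hv (lt_irrefl _)
    | cons h W' => simp [SimpleGraph.Walk.length_cons] at hW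
  | succ ℓ ih =>
    intro i v W hW hv
    cases W with
    | nil => exact absurd hv (lt_irrefl _)
    | @cons _ p _ h W' =>
      have hW' : W'.length ≤ ℓ := by
        simp [SimpleGraph.Walk.length_cons] at hW; omega
      rcases lt_trichotomy p i with hpi | hpi | hpi
      · exact ⟨p, h, hpi, W', by omega⟩
      · subst hpi; exact absurd h (G.loopless.irrefl _)
      · -- i < p
        have hv' : v < p := hv.trans hpi
        obtain ⟨q, hpq, hqp, W₂, hW₂⟩ := ih p v W' hW' hv'
        rcases eq_or_ne q i with hqi | hqi
        · subst hqi
          obtain ⟨w, hw1, hw2, W₃, hW₃⟩ := ih q v W₂ (by omega) hv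
          exact ⟨w, hw1, hw2, W₃, by omega⟩
        · have hiq : G.Adj i q :=
            hG i p q h.symm hpq (Ne.symm hqi) (Or.inr ⟨hpi, hqp⟩)
          rcases lt_or_gt_of_ne hqi with hqlt | hqgt
          · exact ⟨q, hiq, hqlt, W₂, by omega⟩
          · obtain ⟨w, hw1, hw2, W₃, hW₃⟩ :=
              ih i v (SimpleGraph.Walk.cons hiq W₂) (by simpa using hW₂) hv
            exact ⟨w, hw1, hw2, W₃, by omega⟩

/-- Every nonzero vertex of a connected closed graph has a smaller neighbor. -/
lemma exists_smaller_neighbor (hconn : G.Connected) (hG : IsClosedLabeling G)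
    {i : Fin (n + 1)} (hi : 0 < i) : ∃ w, G.Adj i w ∧ w < i := by
  obtain ⟨W⟩ := hconn.preconnected i 0
  obtain ⟨w, h1, h2, -⟩ := descent hG W.length i 0 W le_rfl hi
  exact ⟨w, h1, h2⟩

/-- Weak umbrella property. -/
lemma weak_umbrella (hconn : G.Connected) (hG : IsClosedLabeling G) :
    ∀ (k : ℕ) (a c b : Fin (n + 1)), (c : ℕ) ≤ k → G.Adj a b → a < c → c < b →
      G.Adj a c ∨ G.Adj c b := by
  intro k
  induction k with
  | zero =>
    intro a c b hc hab hac hcb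
    have : (a : ℕ) < (c : ℕ) := hac
    exact absurd this (by omega)
  | succ k ih =>
    intro a c b hc hab hac hcb
    have hc0 : 0 < c := lt_of_le_of_lt (Fin.zero_le a) hac
    obtain ⟨m, hcm, hmc⟩ := exists_smaller_neighbor hconn hG hc0
    rcases lt_trichotomy m a with hma | hma | hma
    · -- m < a : apply IH with edge (m, c) and inner vertex a
      have hmk : (a : ℕ) ≤ k := by
        have h1 : (a : ℕ) < (c : ℕ) := hac
        omega
      rcases ih m a c hmk hcm.symm hma hac with hma' | hac'
      · exact Or.inl (hG a m c hma' hcm.symm (ne_of_lt hac) (Or.inl ⟨hma, hmc⟩))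
      · exact Or.inl hac'
    · subst hma; exact Or.inl hcm.symm
    · -- a < m < c : apply IH with edge (a, b) and inner vertex m
      have hmk : (m : ℕ) ≤ k := by
        have h1 : (m : ℕ) < (c : ℕ) := hmc
        omega
      have hmb : m < b := hmc.trans hcb
      have hboth : G.Adj m b := by
        rcases ih a m b hmk hab hma hmb with h' | h'
        · exact hG m a b h' hab (ne_of_lt hmb) (Or.inl ⟨hma, hma.trans hmb⟩)
        · exact h'
      exact Or.inr (hG c m b hcm.symm hboth (ne_of_lt hcb) (Or.inl ⟨hmc, hmb⟩))

/-- Full umbrella property. -/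
lemma umbrella (hconn : G.Connected) (hG : IsClosedLabeling G)
    {a c b : Fin (n + 1)} (hab : G.Adj a b) (hac : a < c) (hcb : c < b) :
    G.Adj a c ∧ G.Adj c b := by
  rcases weak_umbrella hconn hG (c : ℕ) a c b le_rfl hab hac hcb with h | h
  · exact ⟨h, hG c a b h hab (ne_of_lt hcb) (Or.inl ⟨hac, hac.trans hcb⟩)⟩
  · exact ⟨hG a b c hab.symm h.symm (ne_of_lt hac) (Or.inr ⟨hac.trans hcb, hcb⟩), h⟩

/-- Predecessor on a shortest path. -/
lemma exists_pred (hconn : G.Connected) {j : Fin (n + 1)} {N : ℕ}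
    (h : G.dist 0 j = N + 1) : ∃ u, G.Adj u j ∧ G.dist 0 u = N := by
  obtain ⟨W, hW⟩ := hconn.exists_walk_length_eq_dist (0 : Fin (n + 1)) j
  have hrev : W.reverse.length = N + 1 := by
    rw [SimpleGraph.Walk.length_reverse, hW, h]
  cases hWr : W.reverse with
  | nil => rw [hWr] at hrev; simp at hrev
  | @cons _ u _ hadj W' =>
    rw [hWr] at hrev
    simp [SimpleGraph.Walk.length_cons] at hrev
    refine ⟨u, hadj.symm, le_antisymm ?_ ?_⟩
    · calc G.dist 0 u ≤ W'.reverse.length := SimpleGraph.dist_le _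
        _ = N := by rw [SimpleGraph.Walk.length_reverse]; exact hrev
    · have h1 : G.dist u j ≤ 1 := by
        calc G.dist u j ≤ (SimpleGraph.Walk.cons hadj.symm SimpleGraph.Walk.nil).length :=
              SimpleGraph.dist_le _
          _ = 1 := rfl
      have h2 : G.dist 0 j ≤ G.dist 0 u + G.dist u j := hconn.dist_triangle
      omega

/-- Monotonicity of distance from vertex 0 in a connected closed graph. -/
lemma mono (hconn : G.Connected) (hG : IsClosedLabeling G) :
    ∀ i j : Fin (n + 1), i ≤ j → G.dist 0 i ≤ G.dist 0 j := by
  have key : ∀ M : ℕ, ∀ j i : Fin (n + 1), G.dist 0 j ≤ M → i ≤ j →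
      G.dist 0 i ≤ G.dist 0 j := by
    intro M
    induction M with
    | zero =>
      intro j i hj hij
      have h0 : (0 : Fin (n + 1)) = j := hconn.dist_eq_zero_iff.mp (Nat.le_zero.mp hj)
      subst h0
      have h1 : i = 0 := le_antisymm hij (Fin.zero_le i)
      subst h1; exact le_refl _
    | succ M ihM =>
      intro j i hj hij
      rcases Nat.lt_or_ge (G.dist 0 j) (M + 1) with hlt | hge
      · exact ihM j i (Nat.lt_succ_iff.mp hlt) hij
      · have heq : G.dist 0 j = M + 1 := le_antisymm hj hge
        rcases eq_or_lt_of_le hij with rfl | hij'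
        · exact le_refl _
        · obtain ⟨u, huj, hu⟩ := exists_pred hconn heq
          rcases le_or_gt i u with hiu | hui
          · have := ihM u i (le_of_eq hu) hiu
            omega
          · -- u < i < j, Adj u j : umbrella gives Adj u i
            have hmb := (umbrella hconn hG huj hui hij').1
            have h1 : G.dist 0 i ≤ G.dist 0 u + G.dist u i := hconn.dist_triangle
            have h2 : G.dist u i = 1 := SimpleGraph.dist_eq_one_iff_adj.mpr hmb
            omega
  intro i j hij
  exact key (G.dist 0 j) j i le_rfl hij

end ClosedLabelingAux

theorem next_layer_eq_upNbhd_of_max {n : ℕ} (G : SimpleGraph (Fin (n + 1)))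
    (hconn : G.Connected) (hG : IsClosedLabeling G) (N : ℕ) (d : Fin (n + 1))
    (hd : IsGreatest (layer G N) d) :
    layer G (N + 1) = {j : Fin (n + 1) | G.Adj d j ∧ d < j} := by
  have hdN : G.dist 0 d = N := hd.1
  ext j
  simp only [layer, Set.mem_setOf_eq]
  constructor
  · intro hj
    have hdj : d < j := by
      by_contra hcon
      push_neg at hcon
      have := ClosedLabelingAux.mono hconn hG j d hcon
      omega
    obtain ⟨u, huj, hu⟩ := ClosedLabelingAux.exists_pred hconn hj
    have hud : u ≤ d := hd.2 hu
    rcases eq_or_lt_of_le hud with rfl | hud'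
    · exact ⟨huj, hdj⟩
    · exact ⟨(ClosedLabelingAux.umbrella hconn hG huj hud' hdj).2, hdj⟩
  · rintro ⟨hadj, hdj⟩
    have h1 : G.dist 0 j ≤ G.dist 0 d + G.dist d j := hconn.dist_triangle
    have h2 : G.dist d j = 1 := SimpleGraph.dist_eq_one_iff_adj.mpr hadj
    have h3 : G.dist 0 d ≤ G.dist 0 j := ClosedLabelingAux.mono hconn hG d j (le_of_lt hdj)
    have h4 : G.dist 0 j ≠ N := by
      intro hN
      exact absurd (hd.2 hN) (not_le_of_gt hdj)
    omega
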